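/- Let μ be a Borel measure on G = { (u,v) ∈ ℝ² : u < v } and let M > 0 be such that for every point z of the upper half-plane ℍ, μ( { (u,v) ∈ G : infDist(z, γ(u,v)) ≤ 1 } ) ≤ M, where γ(u,v) = { w ∈ ℍ : |w − (u+v)/2| = (v−u)/2 } and infDist is taken with respect to the hyperbolic metric of ℍ. Then for every λ > 0, the integral ∫_G exp( −(1 + λ) · infDist(i, γ(u,v)) ) dμ(u,v) is finite. -/

import Mathlib

open MeasureTheory UpperHalfPlane

open scoped UpperHalfPlane ENNReal

/-- The hyperbolic geodesic of the upper half-plane with ideal endpoints `u`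
and `v`: the Euclidean semicircle over the segment from `u` to `v`. -/
def geodesicSet (u v : ℝ) : Set ℍ :=
  {z : ℍ | ‖(z : ℂ) - (((u + v) / 2 : ℝ) : ℂ)‖ = |u - v| / 2}

namespace ExpDecayAux

open Real

noncomputable def netPt (m k : ℤ) : ℍ :=
  ⟨⟨(k : ℝ) * Real.exp ((m : ℝ) / 4) / 4, Real.exp ((m : ℝ) / 4)⟩, by
    simpa using Real.exp_pos _⟩

lemma netPt_im (m k : ℤ) : (netPt m k).im = Real.exp ((m : ℝ) / 4) := rfl

lemma arsinh_le_self {x : ℝ} (hx : 0 ≤ x) : Real.arsinh x ≤ x := by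
  rcases eq_or_lt_of_le hx with h | h
  · simp [← h]
  · calc Real.arsinh x ≤ Real.arsinh (Real.sinh x) :=
        Real.arsinh_le_arsinh.2 (Real.self_lt_sinh_iff.2 h).le
    _ = x := Real.arsinh_sinh x

lemma dist_le_div (z w : ℍ) :
    dist z w ≤ dist (z : ℂ) (w : ℂ) / Real.sqrt (z.im * w.im) := by
  rw [UpperHalfPlane.dist_eq]
  have h0 : (0:ℝ) < Real.sqrt (z.im * w.im) := by
    have := z.im_pos; have := w.im_pos; positivity
  have h := arsinh_le_self (x := dist (z : ℂ) (w : ℂ) / (2 * Real.sqrt (z.im * w.im)))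
    (by positivity)
  calc 2 * Real.arsinh (dist (z : ℂ) (w : ℂ) / (2 * Real.sqrt (z.im * w.im)))
      ≤ 2 * (dist (z : ℂ) (w : ℂ) / (2 * Real.sqrt (z.im * w.im))) := by linarith
    _ = dist (z : ℂ) (w : ℂ) / Real.sqrt (z.im * w.im) := by
        field_simp

lemma cosh_le_exp {x : ℝ} (hx : 0 ≤ x) : Real.cosh x ≤ Real.exp x := by
  rw [Real.cosh_eq]
  have : Real.exp (-x) ≤ Real.exp x := Real.exp_le_exp.2 (by linarith)
  linarith


lemma exp_quarter_le : Real.exp (1/4 : ℝ) ≤ 4/3 := by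
  have h := Real.add_one_le_exp (-(1/4) : ℝ)
  rw [Real.exp_neg] at h
  have hp := Real.exp_pos (1/4 : ℝ)
  have h2 : Real.exp (1/4 : ℝ) * (Real.exp (1/4 : ℝ))⁻¹ = 1 := mul_inv_cancel₀ hp.ne'
  nlinarith

lemma exists_net (w : ℍ) : ∃ m k : ℤ, dist (netPt m k) w ≤ 1/2 := by
  set t := Real.log w.im with ht
  set m : ℤ := ⌊4 * t⌋ with hm
  set y : ℝ := Real.exp ((m : ℝ) / 4) with hy
  have hy0 : 0 < y := Real.exp_pos _
  set k : ℤ := round (4 * w.re / y) with hk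
  refine ⟨m, k, ?_⟩
  have hwim : w.im = Real.exp t := (Real.exp_log w.im_pos).symm
  have h1 : y ≤ w.im := by
    rw [hwim, hy]
    exact Real.exp_le_exp.2 (by
      have := Int.floor_le (4 * t)
      linarith)
  have h2 : w.im ≤ 4/3 * y := by
    have h4t : 4 * t ≤ (m : ℝ) + 1 := (Int.lt_floor_add_one (4 * t)).le
    have : w.im ≤ Real.exp (1/4) * y := by
      rw [hwim, hy, ← Real.exp_add]
      exact Real.exp_le_exp.2 (by linarith)
    nlinarith [exp_quarter_le]
  have hre : |w.re - (k : ℝ) * y / 4| ≤ y / 8 := by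
    have h := abs_sub_round (4 * w.re / y)
    rw [abs_sub_comm] at h ⊢
    have : |(k : ℝ) - 4 * w.re / y| * (y/4) ≤ 1/2 * (y/4) :=
      mul_le_mul_of_nonneg_right h (by positivity)
    rw [← abs_of_pos (show (0:ℝ) < y/4 by positivity), ← abs_mul] at this
    have heq : ((k : ℝ) - 4 * w.re / y) * (y/4) = (k : ℝ) * y / 4 - w.re := by
      field_simp
    rw [heq, abs_of_pos (show (0:ℝ) < y/4 by positivity)] at this
    linarith
  have hdC : dist ((netPt m k : ℍ) : ℂ) (w : ℂ) ≤ 11/24 * y := by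
    have h := Complex.norm_le_abs_re_add_abs_im (((netPt m k : ℍ) : ℂ) - (w : ℂ))
    rw [Complex.dist_eq]
    have hre' : |(((netPt m k : ℍ) : ℂ) - (w : ℂ)).re| ≤ y / 8 := by
      simp only [Complex.sub_re]
      rw [show (((netPt m k : ℍ) : ℂ)).re = (k : ℝ) * y / 4 from rfl,
        show ((w : ℂ)).re = w.re from rfl, abs_sub_comm]
      exact hre
    have him' : |(((netPt m k : ℍ) : ℂ) - (w : ℂ)).im| ≤ y / 3 := by
      simp only [Complex.sub_im]
      rw [show (((netPt m k : ℍ) : ℂ)).im = y from rfl, show ((w : ℂ)).im = w.im from rfl]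
      rw [abs_sub_comm, abs_of_nonneg (by linarith)]
      linarith
    linarith
  have hsq : y ≤ Real.sqrt ((netPt m k).im * w.im) := by
    rw [netPt_im, ← hy]
    calc y = Real.sqrt (y * y) := by rw [Real.sqrt_mul_self hy0.le]
    _ ≤ _ := Real.sqrt_le_sqrt (by nlinarith)
  calc dist (netPt m k) w ≤ dist ((netPt m k : ℍ) : ℂ) (w : ℂ) / Real.sqrt ((netPt m k).im * w.im) :=
        dist_le_div _ _
    _ ≤ (11/24 * y) / y := by
        apply div_le_div₀ (by positivity) hdC hy0 hsq
    _ ≤ 1/2 := by rw [mul_div_assoc, div_self hy0.ne']; norm_num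


lemma abs_div_four_le_dist (m k : ℤ) : |(m : ℝ)| / 4 ≤ dist UpperHalfPlane.I (netPt m k) := by
  have h := UpperHalfPlane.dist_log_im_le UpperHalfPlane.I (netPt m k)
  rw [UpperHalfPlane.I_im, netPt_im, Real.log_exp, Real.log_one, Real.dist_eq] at h
  rw [show (0:ℝ) - (m:ℝ)/4 = -((m:ℝ)/4) by ring, abs_neg, abs_div] at h
  simpa using h

lemma cosh_le_exp' {x : ℝ} (hx : 0 ≤ x) : Real.cosh x ≤ Real.exp x := by
  rw [Real.cosh_eq]
  have : Real.exp (-x) ≤ Real.exp x := Real.exp_le_exp.2 (by linarith)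
  linarith

lemma exp_neg_dist_le (m k : ℤ) :
    Real.exp (-dist UpperHalfPlane.I (netPt m k)) ≤
      2 * Real.exp ((m : ℝ) / 4) /
        (((k : ℝ) * Real.exp ((m : ℝ) / 4) / 4) ^ 2 + Real.exp ((m : ℝ) / 4) ^ 2 + 1) := by
  set y : ℝ := Real.exp ((m : ℝ) / 4) with hy
  have hy0 : 0 < y := Real.exp_pos _
  set A : ℝ := ((k : ℝ) * y / 4) ^ 2 with hA
  have hA0 : 0 ≤ A := sq_nonneg _
  have hcosh : Real.cosh (dist UpperHalfPlane.I (netPt m k)) = (A + y ^ 2 + 1) / (2 * y) := by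
    rw [UpperHalfPlane.cosh_dist]
    rw [Complex.dist_eq, Complex.sq_norm, Complex.normSq_apply]
    have h1 : ((UpperHalfPlane.I : ℍ) : ℂ) - ((netPt m k : ℍ) : ℂ) =
        ⟨0 - (k : ℝ) * y / 4, 1 - y⟩ := by
      apply Complex.ext
      · rfl
      · rfl
    rw [h1, UpperHalfPlane.I_im, netPt_im, ← hy]
    show 1 + ((0 - (k:ℝ)*y/4) * (0 - (k:ℝ)*y/4) + (1 - y) * (1 - y)) / (2 * 1 * y)
        = (A + y ^ 2 + 1) / (2 * y)
    rw [hA]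
    field_simp
    ring
  have hd0 : 0 ≤ dist UpperHalfPlane.I (netPt m k) := dist_nonneg
  have hexp : (A + y ^ 2 + 1) / (2 * y) ≤ Real.exp (dist UpperHalfPlane.I (netPt m k)) :=
    hcosh ▸ cosh_le_exp' hd0
  have hpos : (0:ℝ) < (A + y ^ 2 + 1) / (2 * y) := by positivity
  rw [Real.exp_neg]
  calc (Real.exp (dist UpperHalfPlane.I (netPt m k)))⁻¹
      ≤ ((A + y ^ 2 + 1) / (2 * y))⁻¹ := by
        apply inv_anti₀ hpos hexp
    _ = 2 * y / (A + y ^ 2 + 1) := by rw [inv_div]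

lemma key_nat_sum (a b : ℝ) (ha : 0 < a) (hb : 0 < b) :
    ∑' n : ℕ, ENNReal.ofReal (1 / (((n : ℝ) + 1) ^ 2 * a ^ 2 + b ^ 2)) ≤
      ENNReal.ofReal (2 / (a * b)) := by
  have hreal : ∀ N : ℕ, ∑ n ∈ Finset.range N, 1 / (((n : ℝ) + 1) ^ 2 * a ^ 2 + b ^ 2)
      ≤ 2 / (a * b) := by
    intro N
    set g : ℕ → ℝ := fun n => 2 / a * (1 / ((n : ℝ) * a + b)) with hg
    have hterm : ∀ n : ℕ, 1 / (((n : ℝ) + 1) ^ 2 * a ^ 2 + b ^ 2) ≤ g n - g (n + 1) := by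
      intro n
      have h1 : (0:ℝ) < (n : ℝ) * a + b := by positivity
      have h2 : (0:ℝ) < ((n : ℝ) + 1) * a + b := by positivity
      have hgn : g n - g (n + 1) = 2 / (((n : ℝ) * a + b) * (((n : ℝ) + 1) * a + b)) := by
        rw [hg]
        push_cast
        field_simp
        ring
      rw [hgn, div_le_div_iff₀ (by positivity) (by positivity)]
      nlinarith [sq_nonneg (((n : ℝ) + 1) * a - b), sq_nonneg a, mul_pos h1 h2,
        mul_nonneg (mul_nonneg (Nat.cast_nonneg n : (0:ℝ) ≤ n) ha.le) (add_pos h2 h2).le]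
    calc ∑ n ∈ Finset.range N, 1 / (((n : ℝ) + 1) ^ 2 * a ^ 2 + b ^ 2)
        ≤ ∑ n ∈ Finset.range N, (g n - g (n + 1)) := Finset.sum_le_sum fun n _ => hterm n
      _ = g 0 - g N := Finset.sum_range_sub' g N
      _ ≤ g 0 := by
          have : 0 ≤ g N := by positivity
          linarith
      _ = 2 / (a * b) := by
          show 2 / a * (1 / ((0:ℕ) * a + b)) = 2 / (a * b)
          rw [Nat.cast_zero, zero_mul, zero_add, div_mul_div_comm, mul_one]
  rw [ENNReal.tsum_eq_iSup_sum]
  apply iSup_le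
  intro s
  obtain ⟨N, hN⟩ := s.exists_nat_subset_range
  calc ∑ n ∈ s, ENNReal.ofReal (1 / (((n : ℝ) + 1) ^ 2 * a ^ 2 + b ^ 2))
      ≤ ∑ n ∈ Finset.range N, ENNReal.ofReal (1 / (((n : ℝ) + 1) ^ 2 * a ^ 2 + b ^ 2)) :=
        Finset.sum_le_sum_of_subset hN
    _ = ENNReal.ofReal (∑ n ∈ Finset.range N, 1 / (((n : ℝ) + 1) ^ 2 * a ^ 2 + b ^ 2)) := by
        rw [ENNReal.ofReal_sum_of_nonneg]
        intro n _
        positivity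
    _ ≤ ENNReal.ofReal (2 / (a * b)) := ENNReal.ofReal_le_ofReal (hreal N)

lemma inner_bound (m : ℤ) :
    ∑' k : ℤ, ENNReal.ofReal (Real.exp (-dist UpperHalfPlane.I (netPt m k))) ≤
      ENNReal.ofReal 33 := by
  set y : ℝ := Real.exp ((m : ℝ) / 4) with hy
  have hy0 : 0 < y := Real.exp_pos _
  set b : ℝ := Real.sqrt (y ^ 2 + 1) with hb
  have hb0 : 0 < b := Real.sqrt_pos.2 (by positivity)
  have hb2 : b ^ 2 = y ^ 2 + 1 := Real.sq_sqrt (by positivity)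
  have hb1 : 1 ≤ b := by nlinarith [sq_nonneg y, sq_nonneg (b - 1)]
  have hside : ∀ f : ℕ → ℤ, (∀ n : ℕ, ((f n : ℝ)) ^ 2 = ((n : ℝ) + 1) ^ 2) →
      ∑' n : ℕ, ENNReal.ofReal (Real.exp (-dist UpperHalfPlane.I (netPt m (f n)))) ≤
        ENNReal.ofReal 16 := by
    intro f hf
    have hterm : ∀ n : ℕ, ENNReal.ofReal (Real.exp (-dist UpperHalfPlane.I (netPt m (f n))))
        ≤ ENNReal.ofReal (2 * y) *
          ENNReal.ofReal (1 / (((n : ℝ) + 1) ^ 2 * (y / 4) ^ 2 + b ^ 2)) := by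
      intro n
      rw [← ENNReal.ofReal_mul (by positivity)]
      apply ENNReal.ofReal_le_ofReal
      have h := exp_neg_dist_le m (f n)
      rw [← hy] at h
      have hden : ((f n : ℝ) * y / 4) ^ 2 + y ^ 2 + 1
          = ((n : ℝ) + 1) ^ 2 * (y / 4) ^ 2 + b ^ 2 := by
        rw [hb2, mul_div_assoc, mul_pow, hf n]
        ring
      calc Real.exp (-dist UpperHalfPlane.I (netPt m (f n)))
          ≤ 2 * y / (((f n : ℝ) * y / 4) ^ 2 + y ^ 2 + 1) := h
        _ = 2 * y * (1 / (((n : ℝ) + 1) ^ 2 * (y / 4) ^ 2 + b ^ 2)) := by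
            rw [hden, mul_one_div]
    calc ∑' n : ℕ, ENNReal.ofReal (Real.exp (-dist UpperHalfPlane.I (netPt m (f n))))
        ≤ ∑' n : ℕ, ENNReal.ofReal (2 * y) *
            ENNReal.ofReal (1 / (((n : ℝ) + 1) ^ 2 * (y / 4) ^ 2 + b ^ 2)) :=
          ENNReal.tsum_le_tsum hterm
      _ = ENNReal.ofReal (2 * y) *
            ∑' n : ℕ, ENNReal.ofReal (1 / (((n : ℝ) + 1) ^ 2 * (y / 4) ^ 2 + b ^ 2)) :=
          ENNReal.tsum_mul_left
      _ ≤ ENNReal.ofReal (2 * y) * ENNReal.ofReal (2 / ((y / 4) * b)) :=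
          mul_le_mul_right (key_nat_sum (y / 4) b (by positivity) hb0) _
      _ = ENNReal.ofReal (2 * y * (2 / ((y / 4) * b))) :=
          (ENNReal.ofReal_mul (by positivity)).symm
      _ ≤ ENNReal.ofReal 16 := by
          apply ENNReal.ofReal_le_ofReal
          have heq : 2 * y * (2 / ((y / 4) * b)) = 16 / b := by
            field_simp
            ring
          rw [heq]
          calc 16 / b ≤ 16 / 1 := by
                apply div_le_div_of_nonneg_left (by norm_num) (by norm_num) hb1
            _ = 16 := by norm_num
  have h0 : ENNReal.ofReal (Real.exp (-dist UpperHalfPlane.I (netPt m 0))) ≤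
      ENNReal.ofReal 1 := by
    apply ENNReal.ofReal_le_ofReal
    calc Real.exp (-dist UpperHalfPlane.I (netPt m 0)) ≤ Real.exp 0 :=
          Real.exp_le_exp.2 (neg_nonpos.2 dist_nonneg)
      _ = 1 := Real.exp_zero
  have hp := hside (fun n => (n : ℤ) + 1) (by intro n; push_cast; ring)
  have hneg := hside (fun n => -((n : ℤ) + 1)) (by intro n; push_cast; ring)
  rw [tsum_of_add_one_of_neg_add_one ENNReal.summable ENNReal.summable]
  calc (∑' n : ℕ, ENNReal.ofReal (Real.exp (-dist UpperHalfPlane.I (netPt m ((n : ℤ) + 1)))))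
        + ENNReal.ofReal (Real.exp (-dist UpperHalfPlane.I (netPt m 0)))
        + ∑' n : ℕ, ENNReal.ofReal (Real.exp (-dist UpperHalfPlane.I (netPt m (-((n : ℤ) + 1)))))
      ≤ ENNReal.ofReal 16 + ENNReal.ofReal 1 + ENNReal.ofReal 16 :=
        add_le_add (add_le_add hp h0) hneg
    _ = ENNReal.ofReal 33 := by
        rw [← ENNReal.ofReal_add (by norm_num) (by norm_num),
          ← ENNReal.ofReal_add (by norm_num) (by norm_num)]
        norm_num

lemma net_sum_lt_top (lam : ℝ) (hlam : 0 < lam) :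
    ∑' p : ℤ × ℤ,
      ENNReal.ofReal (Real.exp (-(1 + lam) * dist UpperHalfPlane.I (netPt p.1 p.2))) < ⊤ := by
  set r : ℝ≥0∞ := ENNReal.ofReal (Real.exp (-(lam / 4))) with hr
  have hr1 : r < 1 := ENNReal.ofReal_lt_one.2 (Real.exp_lt_one_iff.2 (by linarith))
  have hterm : ∀ p : ℤ × ℤ,
      ENNReal.ofReal (Real.exp (-(1 + lam) * dist UpperHalfPlane.I (netPt p.1 p.2)))
      ≤ r ^ p.1.natAbs * ENNReal.ofReal (Real.exp (-dist UpperHalfPlane.I (netPt p.1 p.2))) := by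
    rintro ⟨m, k⟩
    have hd := abs_div_four_le_dist m k
    have hdn : (0:ℝ) ≤ dist UpperHalfPlane.I (netPt m k) := dist_nonneg
    have hsplit : -(1 + lam) * dist UpperHalfPlane.I (netPt m k)
        = (-(lam) * dist UpperHalfPlane.I (netPt m k)) + (-dist UpperHalfPlane.I (netPt m k)) := by
      ring
    rw [hsplit, Real.exp_add, ENNReal.ofReal_mul (Real.exp_nonneg _)]
    apply mul_le_mul_left
    have h1 : -(lam) * dist UpperHalfPlane.I (netPt m k) ≤ (m.natAbs : ℝ) * (-(lam / 4)) := by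
      have habs : ((m.natAbs : ℝ)) = |(m : ℝ)| := by
        push_cast [Nat.cast_natAbs]
        ring
      rw [habs]
      nlinarith [abs_nonneg (m : ℝ)]
    calc ENNReal.ofReal (Real.exp (-(lam) * dist UpperHalfPlane.I (netPt m k)))
        ≤ ENNReal.ofReal (Real.exp ((m.natAbs : ℝ) * (-(lam / 4)))) :=
          ENNReal.ofReal_le_ofReal (Real.exp_le_exp.2 h1)
      _ = r ^ m.natAbs := by
          rw [Real.exp_nat_mul, hr, ENNReal.ofReal_pow (Real.exp_nonneg _)]
  have hgeom : ∑' m : ℤ, r ^ m.natAbs < ⊤ := by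
    rw [tsum_of_add_one_of_neg_add_one ENNReal.summable ENNReal.summable]
    have hnat : ∑' n : ℕ, r ^ n < ⊤ := by
      rw [ENNReal.tsum_geometric]
      exact ENNReal.inv_lt_top.2 (tsub_pos_of_lt hr1)
    have hside : ∑' n : ℕ, r ^ (n + 1) < ⊤ := by
      refine lt_of_le_of_lt (ENNReal.tsum_le_tsum fun n => ?_) hnat
      rw [pow_succ]
      calc r ^ n * r ≤ r ^ n * 1 := mul_le_mul_right hr1.le _
        _ = r ^ n := mul_one _
    have e1 : ∀ n : ℕ, (((n : ℤ) + 1).natAbs) = n + 1 := by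
      intro n
      rw [show ((n : ℤ) + 1) = ((n + 1 : ℕ) : ℤ) by push_cast; ring, Int.natAbs_natCast]
    have e2 : ∀ n : ℕ, ((-((n : ℤ) + 1)).natAbs) = n + 1 := by
      intro n
      rw [Int.natAbs_neg]
      exact e1 n
    simp only [e1, e2, Int.natAbs_zero, pow_zero]
    exact ENNReal.add_lt_top.2 ⟨ENNReal.add_lt_top.2 ⟨hside, ENNReal.one_lt_top⟩, hside⟩
  calc ∑' p : ℤ × ℤ,
        ENNReal.ofReal (Real.exp (-(1 + lam) * dist UpperHalfPlane.I (netPt p.1 p.2)))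
      ≤ ∑' p : ℤ × ℤ,
          r ^ p.1.natAbs * ENNReal.ofReal (Real.exp (-dist UpperHalfPlane.I (netPt p.1 p.2))) :=
        ENNReal.tsum_le_tsum hterm
    _ = ∑' m : ℤ, ∑' k : ℤ,
          r ^ m.natAbs * ENNReal.ofReal (Real.exp (-dist UpperHalfPlane.I (netPt m k))) :=
        ENNReal.tsum_prod'
    _ = ∑' m : ℤ, r ^ m.natAbs *
          ∑' k : ℤ, ENNReal.ofReal (Real.exp (-dist UpperHalfPlane.I (netPt m k))) :=
        tsum_congr fun m => ENNReal.tsum_mul_left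
    _ ≤ ∑' m : ℤ, r ^ m.natAbs * ENNReal.ofReal 33 :=
        ENNReal.tsum_le_tsum fun m => mul_le_mul_right (inner_bound m) _
    _ = (∑' m : ℤ, r ^ m.natAbs) * ENNReal.ofReal 33 := ENNReal.tsum_mul_right
    _ < ⊤ := ENNReal.mul_lt_top hgeom ENNReal.ofReal_lt_top


lemma geodesic_nonempty {u v : ℝ} (h : u < v) : (geodesicSet u v).Nonempty := by
  have him : (0:ℝ) < (v - u) / 2 := by linarith
  have hmem : (0:ℝ) < (Complex.mk ((u + v) / 2) ((v - u) / 2)).im := him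
  refine ⟨⟨Complex.mk ((u + v) / 2) ((v - u) / 2), hmem⟩, ?_⟩
  show ‖(Complex.mk ((u + v) / 2) ((v - u) / 2) - (((u + v) / 2 : ℝ) : ℂ))‖
      = |u - v| / 2
  have h1 : Complex.mk ((u + v) / 2) ((v - u) / 2) - (((u + v) / 2 : ℝ) : ℂ)
      = Complex.I * (((v - u) / 2 : ℝ) : ℂ) := by
    apply Complex.ext <;> simp
  rw [h1, norm_mul, Complex.norm_I, Complex.norm_real, Real.norm_eq_abs, one_mul,
    abs_of_pos him, abs_of_neg (by linarith : u - v < 0)]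
  ring

noncomputable def wt (lam : ℝ) (p : ℤ × ℤ) : ℝ≥0∞ :=
  ENNReal.ofReal (Real.exp (-(1 + lam) * (dist UpperHalfPlane.I (netPt p.1 p.2) - 1)))

def Sset (z : ℍ) : Set (ℝ × ℝ) :=
  {g : ℝ × ℝ | g.1 < g.2 ∧ Metric.infDist z (geodesicSet g.1 g.2) ≤ 1}

lemma wt_sum_lt_top (lam : ℝ) (hlam : 0 < lam) : ∑' p : ℤ × ℤ, wt lam p < ⊤ := by
  have hce : ∀ p : ℤ × ℤ, wt lam p = ENNReal.ofReal (Real.exp (1 + lam)) *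
      ENNReal.ofReal (Real.exp (-(1 + lam) * dist UpperHalfPlane.I (netPt p.1 p.2))) := by
    intro p
    rw [wt, ← ENNReal.ofReal_mul (Real.exp_nonneg _), ← Real.exp_add]
    have harg : -(1 + lam) * (dist UpperHalfPlane.I (netPt p.1 p.2) - 1)
        = 1 + lam + -(1 + lam) * dist UpperHalfPlane.I (netPt p.1 p.2) := by ring
    rw [harg]
  calc ∑' p : ℤ × ℤ, wt lam p
      = ENNReal.ofReal (Real.exp (1 + lam)) *
        ∑' p : ℤ × ℤ, ENNReal.ofReal
          (Real.exp (-(1 + lam) * dist UpperHalfPlane.I (netPt p.1 p.2))) := by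
        rw [← ENNReal.tsum_mul_left]
        exact tsum_congr hce
    _ < ⊤ := ENNReal.mul_lt_top ENNReal.ofReal_lt_top (net_sum_lt_top lam hlam)


end ExpDecayAux

/-- If a measure `μ` on the space of geodesics `{u < v}` has Thurston-norm type
bound `M` (the measure of geodesics passing within hyperbolic distance 1 of any
point is at most `M`), then `∫ e^{−(1+λ) d_g} dμ(g) < ∞`, where `d_g` is the
distance from the basepoint `i` to the geodesic. -/
theorem exp_decay_integrable_of_thurston_bound
    (μ : Measure (ℝ × ℝ)) (M : ℝ) (hM : 0 < M)
    (hThurston : ∀ z : ℍ,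
      μ {g : ℝ × ℝ | g.1 < g.2 ∧ Metric.infDist z (geodesicSet g.1 g.2) ≤ 1}
        ≤ ENNReal.ofReal M)
    (lam : ℝ) (hlam : 0 < lam) :
    (∫⁻ g in {g : ℝ × ℝ | g.1 < g.2},
        ENNReal.ofReal
          (Real.exp (-(1 + lam) * Metric.infDist UpperHalfPlane.I (geodesicSet g.1 g.2)))
        ∂μ) < ⊤ := by
  classical
  open ExpDecayAux in
  have hThurston' : ∀ p : ℤ × ℤ, μ (Sset (netPt p.1 p.2)) ≤ ENNReal.ofReal M := fun p =>
    hThurston (netPt p.1 p.2)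
  set F : (ℤ × ℤ) → (ℝ × ℝ) → ℝ≥0∞ := fun p =>
    (toMeasurable μ (ExpDecayAux.Sset (ExpDecayAux.netPt p.1 p.2))).indicator
      (fun _ => ExpDecayAux.wt lam p) with hF
  have hFmeas : ∀ p, Measurable (F p) := fun p =>
    measurable_const.indicator (measurableSet_toMeasurable μ _)
  have hpt : ∀ g ∈ {g : ℝ × ℝ | g.1 < g.2},
      ENNReal.ofReal
          (Real.exp (-(1 + lam) * Metric.infDist UpperHalfPlane.I (geodesicSet g.1 g.2)))
        ≤ ∑' p : ℤ × ℤ, F p g := by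
    intro g hg
    have hglt : g.1 < g.2 := hg
    have hne : (geodesicSet g.1 g.2).Nonempty := ExpDecayAux.geodesic_nonempty hglt
    set d := Metric.infDist UpperHalfPlane.I (geodesicSet g.1 g.2) with hd
    have hd0 : 0 ≤ d := Metric.infDist_nonneg
    obtain ⟨w, hw, hwd⟩ := (Metric.infDist_lt_iff hne).1 (show d < d + 1/2 by linarith)
    obtain ⟨m, k, hmk⟩ := ExpDecayAux.exists_net w
    have hgS : g ∈ ExpDecayAux.Sset (ExpDecayAux.netPt m k) := by
      refine ⟨hglt, le_trans (Metric.infDist_le_dist_of_mem hw) ?_⟩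
      exact le_trans hmk (by norm_num)
    have hgT : g ∈ toMeasurable μ (ExpDecayAux.Sset (ExpDecayAux.netPt m k)) :=
      subset_toMeasurable μ _ hgS
    have hdist : dist UpperHalfPlane.I (ExpDecayAux.netPt m k) - 1 ≤ d := by
      have h1 := dist_triangle UpperHalfPlane.I w (ExpDecayAux.netPt m k)
      have h2 : dist w (ExpDecayAux.netPt m k) = dist (ExpDecayAux.netPt m k) w := dist_comm _ _
      have h3 : dist (ExpDecayAux.netPt m k) w ≤ 1/2 := hmk
      linarith
    have hF1 : F (m, k) g = ExpDecayAux.wt lam (m, k) := by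
      rw [hF]
      exact Set.indicator_of_mem hgT _
    calc ENNReal.ofReal (Real.exp (-(1 + lam) * d)) ≤ F (m, k) g := by
          rw [hF1, ExpDecayAux.wt]
          exact ENNReal.ofReal_le_ofReal (Real.exp_le_exp.2 (by nlinarith))
      _ ≤ ∑' p : ℤ × ℤ, F p g := ENNReal.le_tsum (m, k)
  calc (∫⁻ g in {g : ℝ × ℝ | g.1 < g.2},
        ENNReal.ofReal
          (Real.exp (-(1 + lam) * Metric.infDist UpperHalfPlane.I (geodesicSet g.1 g.2)))
        ∂μ)
      ≤ ∫⁻ g in {g : ℝ × ℝ | g.1 < g.2}, ∑' p : ℤ × ℤ, F p g ∂μ :=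
        setLIntegral_mono (Measurable.ennreal_tsum hFmeas) hpt
    _ = ∑' p : ℤ × ℤ, ∫⁻ g in {g : ℝ × ℝ | g.1 < g.2}, F p g ∂μ :=
        lintegral_tsum fun p => (hFmeas p).aemeasurable
    _ ≤ ∑' p : ℤ × ℤ, ExpDecayAux.wt lam p * ENNReal.ofReal M := by
        apply ENNReal.tsum_le_tsum
        intro p
        calc ∫⁻ g in {g : ℝ × ℝ | g.1 < g.2}, F p g ∂μ
            ≤ ExpDecayAux.wt lam p * (μ.restrict {g : ℝ × ℝ | g.1 < g.2})
                (toMeasurable μ (ExpDecayAux.Sset (ExpDecayAux.netPt p.1 p.2))) :=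
              lintegral_indicator_const_le _ _
          _ ≤ ExpDecayAux.wt lam p *
                μ (toMeasurable μ (ExpDecayAux.Sset (ExpDecayAux.netPt p.1 p.2))) :=
              mul_le_mul_right (Measure.restrict_apply_le _ _) _
          _ = ExpDecayAux.wt lam p * μ (ExpDecayAux.Sset (ExpDecayAux.netPt p.1 p.2)) := by
              rw [measure_toMeasurable]
          _ ≤ ExpDecayAux.wt lam p * ENNReal.ofReal M :=
              mul_le_mul_right (hThurston' p) _
    _ = (∑' p : ℤ × ℤ, ExpDecayAux.wt lam p) * ENNReal.ofReal M := ENNReal.tsum_mul_right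
    _ < ⊤ := ENNReal.mul_lt_top (ExpDecayAux.wt_sum_lt_top lam hlam) ENNReal.ofReal_lt_top
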